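/- Let ε ∈ (0,1), η = 2ε/(1−ε), and let D, W be differentiable on an interval I ⊂ (0,∞) with D > 0 and B := D^(−η) − [(W+ε)² − ε(W−1)² + 4εDW]x² ≠ 0 on I, satisfying D' = −2x(1−ε)D(W+ε)(D−W)/B and W' = (1−3W)/x + 2x(1+ε)W(W+ε)(D−W)/B. Set Π = D^(1+η). Then on I: d/dx( Π W x² ) = Π x (1 − W) and d/dx( Π W x³ ) = Π x². -/

import Mathlib

theorem stmt_7 (ε η : ℝ) (hε : 0 < ε) (hε1 : ε < 1) (hη : η = 2*ε/(1-ε))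
    (I : Set ℝ) (hI : I ⊆ Set.Ioi 0)
    (D W B : ℝ → ℝ)
    (hD : ∀ x ∈ I, 0 < D x)
    (hB : ∀ x ∈ I, B x =
      D x ^ (-η) - ((W x + ε)^2 - ε*(W x - 1)^2 + 4*ε*(D x)*(W x)) * x^2)
    (hBne : ∀ x ∈ I, B x ≠ 0)
    (hD' : ∀ x ∈ I,
      HasDerivAt D (-2*x*(1-ε)*(D x)*(W x + ε)*(D x - W x)/(B x)) x)
    (hW' : ∀ x ∈ I,
      HasDerivAt W ((1 - 3*W x)/x + 2*x*(1+ε)*(W x)*(W x + ε)*(D x - W x)/(B x)) x) :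
    ∀ x ∈ I,
      HasDerivAt (fun y => D y ^ (1+η) * W y * y^2) (D x ^ (1+η) * x * (1 - W x)) x ∧
      HasDerivAt (fun y => D y ^ (1+η) * W y * y^3) (D x ^ (1+η) * x^2) x := by
  intro x hx
  have hx0 : 0 < x := hI hx
  have hdx : 0 < D x := hD x hx
  have hdne : D x ≠ 0 := ne_of_gt hdx
  have hb : B x ≠ 0 := hBne x hx
  have hε1' : (1:ℝ) - ε ≠ 0 := by linarith
  have hPi : HasDerivAt (fun y => D y ^ (1+η))
      ((-2*x*(1-ε)*(D x)*(W x + ε)*(D x - W x)/(B x)) * (1+η) * D x ^ ((1+η)-1)) x :=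
    (hD' x hx).rpow_const (Or.inl hdne)
  have hexp : (1:ℝ)+η-1 = η := by ring
  rw [hexp] at hPi
  have hP : D x ^ (1+η) = D x ^ η * D x := by
    rw [add_comm, Real.rpow_add_one hdne]
  have hw := hW' x hx
  constructor
  · have h : HasDerivAt (fun y => D y ^ (1+η) * W y * y^2) _ x := (hPi.mul hw).mul (hasDerivAt_pow 2 x)
    convert h using 1
    simp only [Pi.mul_apply]
    rw [hP, hη]
    push_cast
    field_simp
    ring
  · have h : HasDerivAt (fun y => D y ^ (1+η) * W y * y^3) _ x := (hPi.mul hw).mul (hasDerivAt_pow 3 x)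
    convert h using 1
    simp only [Pi.mul_apply]
    rw [hP, hη]
    push_cast
    field_simp
    ring
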